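/- Let Y_1,...,Y_n be nonnegative integers with Ȳ > 0, and define g(ν) = (1/n)Σ_{i=1}^n [Ψ(ν+Y_i) − Ψ(ν)] − log(1 + Ȳ/ν). Then lim_{ν→∞} ν² g(ν) = (Ȳ − S_n²)/2, where S_n² = (1/n)Σ_{i=1}^n (Y_i − Ȳ)². In particular, g(ν) → 0 as ν → ∞. -/

import Mathlib

open Filter Finset Real

lemma sum_range_cast (m : ℕ) : ∑ k ∈ Finset.range m, (k:ℝ) = m*(m-1)/2 := by
  induction m with
  | zero => simp
  | succ m ih => rw [Finset.sum_range_succ, ih]; push_cast; ring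

lemma psi_telescope (Ψ : ℝ → ℝ) (hΨ : ∀ x : ℝ, 0 < x → Ψ (x + 1) - Ψ x = 1 / x)
    (m : ℕ) (ν : ℝ) (hν : 0 < ν) :
    Ψ (ν + m) - Ψ ν = ∑ k ∈ Finset.range m, 1/(ν + k) := by
  induction m with
  | zero => simp
  | succ m ih =>
    have h := hΨ (ν + m) (by positivity)
    rw [Finset.sum_range_succ, ← ih]
    have e : ν + ((m : ℕ) + 1 : ℕ) = (ν + m) + 1 := by push_cast; ring
    rw [e]
    linarith

set_option maxHeartbeats 1000000 in
/-- With `g(ν) = (1/n)Σᵢ[Ψ(ν+Yᵢ) − Ψ(ν)] − log(1+Ȳ/ν)` and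
`Ȳ > 0`, one has `lim_{ν→∞} ν² g(ν) = (Ȳ − Sₙ²)/2`; in particular
`g(ν) → 0` as `ν → ∞`. -/
theorem g_limit_at_infty (n : ℕ) (hn : 0 < n) (Y : Fin n → ℕ)
    (Ψ : ℝ → ℝ) (hΨ : ∀ x : ℝ, 0 < x → Ψ (x + 1) - Ψ x = 1 / x)
    (Ybar : ℝ) (hYbar : Ybar = (∑ i, (Y i : ℝ)) / n) (hpos : 0 < Ybar)
    (S2 : ℝ) (hS2 : S2 = (1 / n) * ∑ i, ((Y i : ℝ) - Ybar) ^ 2)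
    (g : ℝ → ℝ)
    (hg : ∀ ν : ℝ, g ν = (1 / n) * ∑ i, (Ψ (ν + Y i) - Ψ ν)
      - Real.log (1 + Ybar / ν)) :
    Filter.Tendsto (fun ν : ℝ => ν ^ 2 * g ν) Filter.atTop
      (nhds ((Ybar - S2) / 2)) ∧
    Filter.Tendsto g Filter.atTop (nhds 0) := by
  have hn' : (n:ℝ) ≠ 0 := Nat.cast_ne_zero.mpr hn.ne'
  -- A-part termwise limits
  have hA : ∀ (k : ℕ), Tendsto (fun ν : ℝ => ν^2 * (1/(ν+k) - 1/ν)) atTop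
      (nhds (-(k:ℝ))) := by
    intro k
    have h0 : Tendsto (fun ν : ℝ => -(k:ℝ) + (k:ℝ)^2/(ν+k)) atTop (nhds (-(k:ℝ) + 0)) :=
      tendsto_const_nhds.add (Tendsto.div_atTop tendsto_const_nhds
        (tendsto_atTop_add_const_right _ _ tendsto_id))
    rw [add_zero] at h0
    refine h0.congr' ?_
    filter_upwards [eventually_gt_atTop (0:ℝ)] with ν hν
    have hk : (0:ℝ) < ν + k := by positivity
    field_simp
    ring
  have hAsum : Tendsto (fun ν : ℝ => (1/n : ℝ) *
      ∑ i, ∑ k ∈ Finset.range (Y i), ν^2*(1/(ν+k) - 1/ν)) atTop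
      (nhds ((1/n : ℝ) * ∑ i, ∑ k ∈ Finset.range (Y i), -(k:ℝ))) :=
    (tendsto_finset_sum _ (fun i _ => tendsto_finset_sum _ (fun k _ => hA k))).const_mul _
  -- B-part
  have hB : Tendsto (fun ν : ℝ => ν^2 * (Ybar/ν - Real.log (1 + Ybar/ν))) atTop
      (nhds (Ybar^2/2)) := by
    have key : Tendsto (fun ν : ℝ => ν^2 * (Ybar/ν - Real.log (1 + Ybar/ν)) - Ybar^2/2)
        atTop (nhds 0) := by
      apply squeeze_zero_norm' (a := fun ν : ℝ => Ybar^3/(ν - Ybar))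
      · filter_upwards [eventually_gt_atTop (2*Ybar + 1)] with ν hν
        have hν0 : 0 < ν := by linarith
        have ht0 : 0 < Ybar/ν := div_pos hpos hν0
        have ht1 : Ybar/ν < 1/2 := by rw [div_lt_iff₀ hν0]; linarith
        set t := Ybar/ν with htdef
        have habs : |(-t)| < 1 := by rw [abs_neg, abs_of_pos ht0]; linarith
        have h2 := Real.abs_log_sub_add_sum_range_le habs 2
        rw [abs_neg, abs_of_pos ht0] at h2
        simp only [Finset.sum_range_succ, Finset.sum_range_zero, zero_add] at h2
        have hne : ν ≠ 0 := hν0.ne'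
        have hc2 : Ybar^2/2 = ν^2 * (t^2/2) := by rw [htdef]; field_simp
        have e1 : ν^2 * (Ybar/ν - Real.log (1 + Ybar/ν)) - Ybar^2/2 =
            -(ν^2 * (((-t)^(0+1)/((0:ℕ)+1) + (-t)^(1+1)/((1:ℕ)+1)) + Real.log (1 - -t))) := by
          rw [hc2]
          push_cast
          have : (1 : ℝ) - -t = 1 + t := by ring
          rw [this, htdef]
          ring
        rw [e1, norm_neg, norm_mul, norm_pow]
        have e2 : ν^2 * (t^(2+1)/(1-t)) = Ybar^3/(ν - Ybar) := by
          rw [htdef]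
          have hd : (0:ℝ) < ν - Ybar := by linarith
          have h1t : (1:ℝ) - Ybar/ν ≠ 0 := by
            have : Ybar/ν < 1 := by linarith
            linarith
          field_simp [hd.ne']
          ring
          field_simp
        calc ‖ν‖^2 * ‖((-t)^(0+1)/((0:ℕ)+1) + (-t)^(1+1)/((1:ℕ)+1)) + Real.log (1 - -t)‖
            ≤ ν^2 * (t^(2+1)/(1-t)) := by
              rw [Real.norm_eq_abs, Real.norm_eq_abs, abs_of_pos hν0]
              exact mul_le_mul_of_nonneg_left h2 (by positivity)
          _ = Ybar^3/(ν - Ybar) := e2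
      · exact Tendsto.div_atTop tendsto_const_nhds
          (tendsto_atTop_add_const_right _ _ tendsto_id)
    have := key.add_const (Ybar^2/2)
    simpa using this
  have hsum := hAsum.add hB
  -- identify the limit value
  have hval : (1/n : ℝ) * (∑ i, ∑ k ∈ Finset.range (Y i), -(k:ℝ)) + Ybar^2/2
      = (Ybar - S2)/2 := by
    have hsk : ∀ i : Fin n, ∑ k ∈ Finset.range (Y i), -(k:ℝ)
        = -((Y i:ℝ)^2 - (Y i:ℝ))/2 := by
      intro i
      rw [Finset.sum_neg_distrib, sum_range_cast]
      ring
    simp only [hsk]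
    have hexp : ∑ i, ((Y i:ℝ) - Ybar)^2
        = (∑ i, (Y i:ℝ)^2) - 2*Ybar*(∑ i, (Y i:ℝ)) + n*Ybar^2 := by
      simp only [sub_sq]
      rw [Finset.sum_add_distrib, Finset.sum_sub_distrib,
        Finset.sum_const, Finset.card_univ, Fintype.card_fin, nsmul_eq_mul]
      congr 1
      congr 1
      rw [Finset.mul_sum]
      exact Finset.sum_congr rfl (fun i _ => by ring)
    have hsum2 : ∑ i, (-((Y i:ℝ)^2 - (Y i:ℝ))/2)
        = -((∑ i, (Y i:ℝ)^2) - (∑ i, (Y i:ℝ)))/2 := by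
      rw [← Finset.sum_div]
      congr 1
      rw [Finset.sum_neg_distrib]
      congr 1
      exact Finset.sum_sub_distrib _ _
    rw [hsum2, hS2, hexp, hYbar]
    field_simp
    ring
  rw [hval] at hsum
  -- eventual equality of ν² g with the decomposition
  have heq : (fun ν : ℝ => (1/n : ℝ) *
        ∑ i, ∑ k ∈ Finset.range (Y i), ν^2*(1/(ν+k) - 1/ν)
        + ν^2 * (Ybar/ν - Real.log (1 + Ybar/ν)))
      =ᶠ[atTop] (fun ν : ℝ => ν ^ 2 * g ν) := by
    filter_upwards [eventually_gt_atTop (0:ℝ)] with ν hν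
    rw [hg ν]
    have hT : ∀ i : Fin n, Ψ (ν + Y i) - Ψ ν = ∑ k ∈ Finset.range (Y i), 1/(ν + k) :=
      fun i => psi_telescope Ψ hΨ (Y i) ν hν
    simp only [hT]
    have h1 : ∀ i : Fin n, ∑ k ∈ Finset.range (Y i), (ν^2*(1/(ν+(k:ℝ)) - 1/ν)) =
        ν^2 * (∑ k ∈ Finset.range (Y i), 1/(ν+(k:ℝ))) - ν * (Y i) := by
      intro i
      simp only [mul_sub]
      rw [Finset.sum_sub_distrib, ← Finset.mul_sum, Finset.sum_const, Finset.card_range,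
        nsmul_eq_mul]
      have : (Y i:ℝ) * (ν^2 * (1/ν)) = ν * (Y i) := by field_simp
      rw [this]
    simp only [h1]
    rw [Finset.sum_sub_distrib, ← Finset.mul_sum, ← Finset.mul_sum]
    rw [hYbar]
    field_simp
    ring
  have part1 := hsum.congr' heq
  refine ⟨part1, ?_⟩
  have hinv : Tendsto (fun ν : ℝ => (ν^2)⁻¹) atTop (nhds 0) :=
    (tendsto_pow_atTop (two_ne_zero)).inv_tendsto_atTop
  have h2 := hinv.mul part1
  rw [zero_mul] at h2
  refine h2.congr' ?_
  filter_upwards [eventually_gt_atTop (0:ℝ)] with ν hν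
  field_simp
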